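/- arXiv:2212.06594 — 6 statements merged into one kernel-verified Lean document; each statement's English description precedes it below -/
import Mathlib

section
/- Let Γ be the attractor of an iterated function system {s_1,...,s_M} of contracting similarities on ℝⁿ (so Γ is the unique nonempty compact set with Γ = ⋃ₘ sₘ(Γ)). Then the sets Γ₁ = s₁(Γ), ..., Γ_M = s_M(Γ) are pairwise disjoint if and only if there exists a nonempty bounded open set O ⊂ ℝⁿ with Γ ⊂ O such that ⋃ₘ sₘ(O) ⊂ O and sₘ(O) ∩ s_{m'}(O) = ∅ for m ≠ m'. -/
open Set Bornology

/-- For the attractor Γ of an IFS of contracting similarities,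
the pieces s_m(Γ) are pairwise disjoint iff the open set condition holds
for some nonempty bounded open set O containing Γ. -/
theorem stmt_0 {n M : ℕ} (hM : 2 ≤ M)
    (s : Fin M → EuclideanSpace ℝ (Fin n) → EuclideanSpace ℝ (Fin n))
    (ρ : Fin M → ℝ) (hρ : ∀ m, ρ m ∈ Set.Ioo (0 : ℝ) 1)
    (hsim : ∀ m x y, dist (s m x) (s m y) = ρ m * dist x y)
    (Γ : Set (EuclideanSpace ℝ (Fin n)))
    (hΓne : Γ.Nonempty) (hΓc : IsCompact Γ)
    (hfix : Γ = ⋃ m, s m '' Γ) :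
    (Pairwise fun m m' => Disjoint (s m '' Γ) (s m' '' Γ)) ↔
      ∃ O : Set (EuclideanSpace ℝ (Fin n)), O.Nonempty ∧ IsOpen O ∧ IsBounded O ∧
        Γ ⊆ O ∧ (⋃ m, s m '' O) ⊆ O ∧
        Pairwise fun m m' => Disjoint (s m '' O) (s m' '' O) := by
  haveI : NeZero M := ⟨by omega⟩
  have hcont : ∀ m, Continuous (s m) := by
    intro m
    exact (LipschitzWith.of_dist_le_mul (K := (ρ m).toNNReal) (fun x y => by
      rw [hsim m x y, Real.coe_toNNReal _ (hρ m).1.le])).continuous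
  have hKc : ∀ m, IsCompact (s m '' Γ) := fun m => hΓc.image (hcont m)
  have hKne : ∀ m, (s m '' Γ).Nonempty := fun m => hΓne.image _
  have hKsub : ∀ m, s m '' Γ ⊆ Γ := by
    intro m x hx
    rw [hfix]
    exact mem_iUnion.2 ⟨m, hx⟩
  constructor
  · intro hdisj
    obtain ⟨δ, hδpos, hδ⟩ :
        ∃ δ : Fin M → Fin M → ℝ, (∀ m m', 0 < δ m m') ∧
          ∀ m m', m ≠ m' → Disjoint (Metric.thickening (δ m m') (s m '' Γ))
            (Metric.thickening (δ m m') (s m' '' Γ)) := by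
      have h : ∀ m m' : Fin M, ∃ d, 0 < d ∧ (m ≠ m' →
          Disjoint (Metric.thickening d (s m '' Γ)) (Metric.thickening d (s m' '' Γ))) := by
        intro m m'
        by_cases h : m = m'
        · exact ⟨1, one_pos, fun h' => absurd h h'⟩
        · obtain ⟨d, dpos, hd⟩ := (hdisj h).exists_thickenings (hKc m) (hKc m').isClosed
          exact ⟨d, dpos, fun _ => hd⟩
      choose δ h1 h2 using h
      exact ⟨δ, h1, h2⟩
    set ε : ℝ := Finset.univ.inf' Finset.univ_nonempty
      (fun p : Fin M × Fin M => δ p.1 p.2) with hε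
    have hεpos : 0 < ε := by
      rw [hε, Finset.lt_inf'_iff]
      exact fun p _ => hδpos p.1 p.2
    have hεle : ∀ m m', ε ≤ δ m m' := fun m m' =>
      Finset.inf'_le _ (Finset.mem_univ (m, m'))
    refine ⟨Metric.thickening ε Γ, hΓne.mono (Metric.self_subset_thickening hεpos Γ),
      Metric.isOpen_thickening, hΓc.isBounded.thickening,
      Metric.self_subset_thickening hεpos Γ, ?_, ?_⟩
    · -- invariance
      rintro x hx
      simp only [mem_iUnion] at hx
      obtain ⟨m, y, hy, rfl⟩ := hx
      rw [Metric.mem_thickening_iff_infDist_lt hΓne] at hy ⊢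
      obtain ⟨z, hzΓ, hz⟩ := hΓc.exists_infDist_eq_dist hΓne y
      calc Metric.infDist (s m y) Γ ≤ dist (s m y) (s m z) :=
            Metric.infDist_le_dist_of_mem (hKsub m ⟨z, hzΓ, rfl⟩)
        _ = ρ m * dist y z := hsim m y z
        _ = ρ m * Metric.infDist y Γ := by rw [hz]
        _ < ρ m * ε := by
            exact mul_lt_mul_of_pos_left hy (hρ m).1
        _ ≤ 1 * ε := mul_le_mul_of_nonneg_right (hρ m).2.le hεpos.le
        _ = ε := one_mul ε
    · -- disjointness
      intro m m' hmm'
      have himg : ∀ k, s k '' Metric.thickening ε Γ ⊆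
          Metric.thickening (δ m m') (s k '' Γ) := by
        rintro k _ ⟨y, hy, rfl⟩
        rw [Metric.mem_thickening_iff_infDist_lt hΓne] at hy
        rw [Metric.mem_thickening_iff_infDist_lt (hKne k)]
        obtain ⟨z, hzΓ, hz⟩ := hΓc.exists_infDist_eq_dist hΓne y
        calc Metric.infDist (s k y) (s k '' Γ) ≤ dist (s k y) (s k z) :=
              Metric.infDist_le_dist_of_mem ⟨z, hzΓ, rfl⟩
          _ = ρ k * dist y z := hsim k y z
          _ = ρ k * Metric.infDist y Γ := by rw [hz]
          _ < ρ k * ε := mul_lt_mul_of_pos_left hy (hρ k).1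
          _ ≤ 1 * ε := mul_le_mul_of_nonneg_right (hρ k).2.le hεpos.le
          _ = ε := one_mul ε
          _ ≤ δ m m' := hεle m m'
      exact (hδ m m' hmm').mono (himg m) (himg m')
  · rintro ⟨O, -, -, -, hΓO, -, hOdisj⟩
    intro m m' hmm'
    exact (hOdisj hmm').mono (image_mono hΓO) (image_mono hΓO)
end

section
/- Let s₁,...,s_M be contracting similarities on ℝⁿ with ratios ρₘ, satisfying the open set condition for a bounded open set O. If ∑ₘ ρₘⁿ = 1 (i.e. the similarity dimension equals n), then s(closure O) = closure O, where s(E) = ⋃ₘ sₘ(E), and consequently Γ = closure(O), where Γ is the attractor. -/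
open Set Bornology MeasureTheory EMetric

lemma sim_exists {n : ℕ} (f : EuclideanSpace ℝ (Fin n) → EuclideanSpace ℝ (Fin n)) (ρ : ℝ)
    (hρ : 0 < ρ) (hf : ∀ x y, dist (f x) (f y) = ρ * dist x y) :
    ∃ h : EuclideanSpace ℝ (Fin n) ≃ₜ EuclideanSpace ℝ (Fin n),
      ⇑h = f ∧ ∀ A : Set (EuclideanSpace ℝ (Fin n)),
        volume (f '' A) = ENNReal.ofReal (ρ ^ n) * volume A := by
  set c := f 0 with hc
  have hg : Isometry (fun x => ρ⁻¹ • (f x - c)) := by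
    apply Isometry.of_dist_eq
    intro x y
    rw [dist_smul₀, dist_sub_right, hf, Real.norm_eq_abs, abs_of_pos (inv_pos.2 hρ)]
    field_simp
  let ai := hg.affineIsometryOfStrictConvexSpace
  have hai : ∀ x, ai x = ρ⁻¹ • (f x - c) := fun x => rfl
  have hdecomp : ∀ x, ai x = ai.linearIsometry x + ai 0 := by
    intro x
    have := ai.toAffineMap.decomp
    have hx := congrFun this x
    simpa using hx
  have hai0 : ai 0 = 0 := by rw [hai]; simp [hc]
  have hlin : ∀ x, ai.linearIsometry x = ρ⁻¹ • (f x - c) := by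
    intro x
    rw [← hai x, hdecomp x, hai0, add_zero]
  let L := ai.linearIsometry.toLinearIsometryEquiv rfl
  have hL : ∀ x, (L x : EuclideanSpace ℝ (Fin n)) = ρ⁻¹ • (f x - c) := fun x => hlin x
  have hfx : ∀ x, f x = c + ρ • L x := by
    intro x
    rw [hL x, smul_inv_smul₀ hρ.ne']
    abel
  refine ⟨(L.toHomeomorph.trans (Homeomorph.smulOfNeZero ρ hρ.ne')).trans
      (Homeomorph.addLeft c), ?_, ?_⟩
  · funext x
    simp [hfx x, Homeomorph.smulOfNeZero]
  · intro A
    have himg : f '' A = (fun y => c + y) '' ((fun y => ρ • y) '' (⇑L '' A)) := by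
      rw [← image_comp, ← image_comp]
      exact image_congr' hfx
    have hLA : volume (⇑L '' A) = volume A := by
      have h1 : ⇑L '' A = ⇑L.symm ⁻¹' A := L.image_eq_preimage_symm A
      have h2 : volume (⇑L.symm ⁻¹' A) = Measure.map (⇑L.symm) volume A := by
        rw [← LinearIsometryEquiv.coe_toMeasurableEquiv,
          MeasurableEquiv.map_apply, LinearIsometryEquiv.coe_toMeasurableEquiv]
      rw [h1, h2, L.symm.measurePreserving.map_eq]
    rw [himg, image_add_left, measure_preimage_add, image_smul,
      Measure.addHaar_smul, hLA, finrank_euclideanSpace_fin,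
      abs_of_pos (pow_pos hρ n)]

/-- If the IFS satisfies the open set condition with bounded open O and the
similarity dimension equals n (∑ ρₘⁿ = 1), then s(closure O) = closure O and the
attractor Γ equals closure O. -/
theorem stmt_2 {n M : ℕ} (hM : 2 ≤ M)
    (s : Fin M → EuclideanSpace ℝ (Fin n) → EuclideanSpace ℝ (Fin n))
    (ρ : Fin M → ℝ) (hρ : ∀ m, ρ m ∈ Set.Ioo (0 : ℝ) 1)
    (hsim : ∀ m x y, dist (s m x) (s m y) = ρ m * dist x y)
    (O : Set (EuclideanSpace ℝ (Fin n)))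
    (hOne : O.Nonempty) (hOopen : IsOpen O) (hObdd : IsBounded O)
    (hOSC1 : (⋃ m, s m '' O) ⊆ O)
    (hOSC2 : Pairwise fun m m' => Disjoint (s m '' O) (s m' '' O))
    (Γ : Set (EuclideanSpace ℝ (Fin n)))
    (hΓne : Γ.Nonempty) (hΓc : IsCompact Γ)
    (hfix : Γ = ⋃ m, s m '' Γ)
    (hsum : ∑ m, ρ m ^ (n : ℝ) = 1) :
    (⋃ m, s m '' closure O) = closure O ∧ Γ = closure O := by
  have hMne : Nonempty (Fin M) := ⟨⟨0, by omega⟩⟩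
  choose h hh hvol using fun m => sim_exists (s m) (ρ m) (hρ m).1 (hsim m)
  set U := ⋃ m, s m '' O with hU
  have hUopen : IsOpen U := by
    apply isOpen_iUnion
    intro m
    rw [← hh m]
    exact (h m).isOpen_image.mpr hOopen
  have hsum' : ∑ m, ρ m ^ n = 1 := by
    rw [← hsum]
    exact Finset.sum_congr rfl fun m _ => by rw [← Real.rpow_natCast]
  have hUvol : volume U = volume O := by
    rw [hU, measure_iUnion hOSC2 (fun m => by
      rw [← hh m]; exact ((h m).isOpen_image.mpr hOopen).measurableSet)]
    rw [tsum_fintype]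
    calc ∑ m, volume (s m '' O) = ∑ m, ENNReal.ofReal (ρ m ^ n) * volume O := by
          simp only [hvol]
      _ = (∑ m, ENNReal.ofReal (ρ m ^ n)) * volume O := by rw [Finset.sum_mul]
      _ = volume O := by
          rw [← ENNReal.ofReal_sum_of_nonneg (fun m _ => le_of_lt (pow_pos (hρ m).1 n)),
            hsum', ENNReal.ofReal_one, one_mul]
  have hOfin : volume O ≠ ⊤ := hObdd.measure_lt_top.ne
  have hdiff : volume (O \ U) = 0 := by
    rw [measure_diff hOSC1 hUopen.measurableSet.nullMeasurableSet (hUvol ▸ hOfin),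
      hUvol, tsub_self]
  have hsubcl : O ⊆ closure U := by
    intro x hx
    by_contra hxc
    have hVopen : IsOpen (O ∩ (closure U)ᶜ) := hOopen.inter isClosed_closure.isOpen_compl
    have hVne : (O ∩ (closure U)ᶜ).Nonempty := ⟨x, hx, hxc⟩
    have hpos : 0 < volume (O ∩ (closure U)ᶜ) := hVopen.measure_pos volume hVne
    have hsub : O ∩ (closure U)ᶜ ⊆ O \ U :=
      fun y hy => ⟨hy.1, fun hyU => hy.2 (subset_closure hyU)⟩
    exact absurd (le_trans (measure_mono hsub) hdiff.le) (not_le.mpr hpos)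
  have hclU : closure U = ⋃ m, s m '' closure O := by
    calc closure U = ⋃ m, closure (s m '' O) := by
          rw [hU, ← Set.biUnion_univ, (Set.finite_univ).closure_biUnion, Set.biUnion_univ]
      _ = ⋃ m, s m '' closure O := by
          refine iUnion_congr fun m => ?_
          rw [← hh m, ← (h m).image_closure]
  have hfix2 : (⋃ m, s m '' closure O) = closure O := by
    rw [← hclU]
    apply subset_antisymm (closure_mono hOSC1)
    exact closure_minimal hsubcl isClosed_closure
  refine ⟨hfix2, ?_⟩
  -- uniqueness of the attractor via Hausdorff edistance contraction
  set K := closure O with hK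
  have hKcomp : IsCompact K := hObdd.isCompact_closure
  have hKne : K.Nonempty := hOne.closure
  set d := hausdorffEdist Γ K with hd
  have hdne : d ≠ ⊤ :=
    Metric.hausdorffEdist_ne_top_of_nonempty_of_bounded hΓne hKne hΓc.isBounded hObdd.closure
  set c : ℝ := Finset.univ.sup' Finset.univ_nonempty ρ with hcdef
  have hc1 : c < 1 := by
    rw [hcdef, Finset.sup'_lt_iff]
    exact fun m _ => (hρ m).2
  have hρc : ∀ m, ρ m ≤ c := fun m => Finset.le_sup' ρ (Finset.mem_univ m)
  have hbound : ∀ (m : Fin M) (a : EuclideanSpace ℝ (Fin n))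
      (b : EuclideanSpace ℝ (Fin n)), edist a b ≤ d →
      edist (s m a) (s m b) ≤ ENNReal.ofReal c * d := by
    intro m a b hab
    rw [edist_dist, hsim m, ENNReal.ofReal_mul (hρ m).1.le, ← edist_dist]
    exact mul_le_mul' (ENNReal.ofReal_le_ofReal (hρc m)) hab
  have hkey : d ≤ ENNReal.ofReal c * d := by
    rw [hd]
    apply hausdorffEdist_le_of_mem_edist
    · intro x hx
      rw [hfix] at hx
      obtain ⟨m, a, ha, rfl⟩ := by simpa using hx
      obtain ⟨b, hb, hab⟩ := hKcomp.exists_infEdist_eq_edist hKne a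
      have hab' : edist a b ≤ d := by
        rw [← hab]
        exact infEdist_le_hausdorffEdist_of_mem ha
      refine ⟨s m b, ?_, hbound m a b hab'⟩
      rw [← hfix2]
      exact mem_iUnion.2 ⟨m, mem_image_of_mem _ hb⟩
    · intro x hx
      rw [← hfix2] at hx
      obtain ⟨m, a, ha, rfl⟩ := by simpa using hx
      obtain ⟨b, hb, hab⟩ := hΓc.exists_infEdist_eq_edist hΓne a
      have hab' : edist a b ≤ d := by
        rw [← hab, hd, hausdorffEdist, Metric.hausdorffEDist_comm]
        exact infEdist_le_hausdorffEdist_of_mem ha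
      refine ⟨s m b, ?_, hbound m a b hab'⟩
      rw [hfix]
      exact mem_iUnion.2 ⟨m, mem_image_of_mem _ hb⟩
  have hd0 : d = 0 := by
    by_contra hd0
    have : ENNReal.ofReal c * d < 1 * d := by
      rw [ENNReal.mul_lt_mul_iff_left hd0 hdne]
      exact lt_of_lt_of_le (ENNReal.ofReal_lt_one.2 hc1) le_rfl
    rw [one_mul] at this
    exact absurd (lt_of_le_of_lt hkey this) (lt_irrefl d)
  have := hausdorffEdist_zero_iff_closure_eq_closure.1 hd0
  rwa [hΓc.isClosed.closure_eq, hK, closure_closure] at this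
end

section
/- Let Γ be the attractor of an IFS of contracting similarities on ℝⁿ satisfying the open set condition, with similarity dimension d solving ∑ₘ ρₘ^d = 1. If the pieces Γ₁,...,Γ_M are pairwise disjoint, then 0 < d < n. -/
open Set Bornology

section Aux

open Metric MeasureTheory
open scoped Pointwise

variable {E : Type*} [NormedAddCommGroup E] [InnerProductSpace ℝ E]

theorem aux_isom_linear (g : E → E) (h0 : g 0 = 0)
    (hd : ∀ x y, dist (g x) (g y) = dist x y) : IsLinearMap ℝ g := by
  have hnorm : ∀ x, ‖g x‖ = ‖x‖ := by
    intro x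
    have := hd x 0
    rwa [h0, dist_zero_right, dist_zero_right] at this
  have key : ∀ u v : E, inner ℝ (g u) (g v) = inner ℝ u v := by
    intro u v
    have h1 := norm_sub_sq_real (g u) (g v)
    have h2 := norm_sub_sq_real u v
    have h3 : ‖g u - g v‖ = ‖u - v‖ := by
      rw [← dist_eq_norm, ← dist_eq_norm, hd]
    rw [h3, hnorm, hnorm] at h1
    nlinarith [h1, h2]
  constructor
  · intro x y
    have hz : ‖g (x + y) - g x - g y‖ ^ 2 = 0 := by
      have : ‖g (x + y) - g x - g y‖ ^ 2 = ‖(x + y) - x - y‖ ^ 2 := by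
        rw [← real_inner_self_eq_norm_sq, ← real_inner_self_eq_norm_sq]
        simp only [inner_sub_left, inner_sub_right, key]
      simp at this ⊢
      simpa using this
    have := pow_eq_zero_iff (n := 2) (by norm_num) |>.mp hz
    rw [norm_eq_zero, sub_eq_zero, sub_eq_iff_eq_add] at this
    rw [this]; abel
  · intro c x
    have hz : ‖g (c • x) - c • g x‖ ^ 2 = 0 := by
      rw [← real_inner_self_eq_norm_sq]
      simp only [inner_sub_left, inner_sub_right, real_inner_smul_left,
        real_inner_smul_right, key]
      ring
    have := pow_eq_zero_iff (n := 2) (by norm_num) |>.mp hz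
    rw [norm_eq_zero, sub_eq_zero] at this
    exact this

theorem aux_sim {n : ℕ} (s : EuclideanSpace ℝ (Fin n) → EuclideanSpace ℝ (Fin n))
    (ρ : ℝ) (hρ : 0 < ρ) (hsim : ∀ x y, dist (s x) (s y) = ρ * dist x y) :
    ∃ h : EuclideanSpace ℝ (Fin n) ≃ₜ EuclideanSpace ℝ (Fin n), ⇑h = s ∧
      ∀ A : Set (EuclideanSpace ℝ (Fin n)),
        volume (s '' A) = ENNReal.ofReal (ρ ^ n) * volume A := by
  set g : EuclideanSpace ℝ (Fin n) → EuclideanSpace ℝ (Fin n) := fun x => ρ⁻¹ • (s x - s 0) with hg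
  have hg0 : g 0 = 0 := by simp [hg]
  have hgd : ∀ x y, dist (g x) (g y) = dist x y := by
    intro x y
    rw [hg]
    simp only
    rw [dist_smul₀, dist_sub_right, hsim, Real.norm_eq_abs, abs_of_pos (inv_pos.mpr hρ)]
    field_simp
  have hlin := aux_isom_linear g hg0 hgd
  set L : EuclideanSpace ℝ (Fin n) →ₗ[ℝ] EuclideanSpace ℝ (Fin n) := IsLinearMap.mk' g hlin with hL
  have hLg : ∀ x, L x = g x := fun x => rfl
  have hLnorm : ∀ x, ‖L x‖ = ‖x‖ := by
    intro x
    have := hgd x 0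
    rw [hg0] at this
    rw [hLg]
    rwa [dist_zero_right, dist_zero_right] at this
  set li : EuclideanSpace ℝ (Fin n) →ₗᵢ[ℝ] EuclideanSpace ℝ (Fin n) := ⟨L, hLnorm⟩ with hli
  set f := li.toLinearIsometryEquiv rfl with hf
  have hfx : ∀ x, (f x : EuclideanSpace ℝ (Fin n)) = g x := fun x => rfl
  have hs_eq : ∀ x, s x = s 0 + ρ • f x := by
    intro x
    rw [hfx, hg]
    simp only
    rw [smul_inv_smul₀ hρ.ne']
    abel
  refine ⟨f.toHomeomorph.trans ((Homeomorph.smulOfNeZero ρ hρ.ne').trans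
      (Homeomorph.addLeft (s 0))), ?_, ?_⟩
  · funext x
    simp [Homeomorph.smulOfNeZero, hs_eq x]
  · intro A
    have himg : s '' A = (s 0) +ᵥ (ρ • (⇑f '' A)) := by
      have h1 : s '' A = (fun x => s 0 +ᵥ x) '' ((fun y => ρ • y) '' (⇑f '' A)) := by
        rw [Set.image_image, Set.image_image]
        exact Set.image_congr fun x _ => hs_eq x
      rw [h1, Set.image_vadd, Set.image_smul]
    have hfA : volume (⇑f '' A) = volume A := by
      rw [f.image_eq_preimage_symm]
      have h1 : ⇑(f.symm.toMeasurableEquiv) = ⇑f.symm := f.symm.coe_toMeasurableEquiv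
      calc volume (⇑f.symm ⁻¹' A)
          = Measure.map (⇑f.symm.toMeasurableEquiv) volume A := by
            rw [MeasurableEquiv.map_apply, h1]
        _ = volume A := by
            rw [show ⇑f.symm.toMeasurableEquiv = ⇑f.symm from h1,
              f.symm.measurePreserving.map_eq]
    rw [himg, measure_vadd volume, Measure.addHaar_smul, finrank_euclideanSpace_fin,
      abs_pow, abs_of_pos hρ, hfA]

end Aux

open Metric MeasureTheory

/-- For the attractor of an IFS of contracting similarities satisfying the
open set condition, with similarity dimension d solving ∑ ρₘ^d = 1, if the pieces
s₁(Γ),...,s_M(Γ) are pairwise disjoint then 0 < d < n. -/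
theorem stmt_3 {n M : ℕ} (hM : 2 ≤ M)
    (s : Fin M → EuclideanSpace ℝ (Fin n) → EuclideanSpace ℝ (Fin n))
    (ρ : Fin M → ℝ) (hρ : ∀ m, ρ m ∈ Set.Ioo (0 : ℝ) 1)
    (hsim : ∀ m x y, dist (s m x) (s m y) = ρ m * dist x y)
    (O : Set (EuclideanSpace ℝ (Fin n)))
    (hOne : O.Nonempty) (hOopen : IsOpen O) (hObdd : IsBounded O)
    (hOSC1 : (⋃ m, s m '' O) ⊆ O)
    (hOSC2 : Pairwise fun m m' => Disjoint (s m '' O) (s m' '' O))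
    (Γ : Set (EuclideanSpace ℝ (Fin n)))
    (hΓne : Γ.Nonempty) (hΓc : IsCompact Γ)
    (hfix : Γ = ⋃ m, s m '' Γ)
    (d : ℝ) (hsum : ∑ m, ρ m ^ d = 1)
    (hdisj : Pairwise fun m m' => Disjoint (s m '' Γ) (s m' '' Γ)) :
    0 < d ∧ d < n := by
  haveI : Nonempty (Fin M) := ⟨⟨0, by omega⟩⟩
  have hM2 : (2 : ℝ) ≤ (M : ℝ) := by exact_mod_cast hM
  -- d > 0
  have hd0 : 0 < d := by
    by_contra h
    push_neg at h
    have h1 : ∀ m : Fin M, (1 : ℝ) ≤ ρ m ^ d := fun m =>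
      Real.one_le_rpow_of_pos_of_le_one_of_nonpos (hρ m).1 (hρ m).2.le h
    have h2 : (M : ℝ) ≤ ∑ m, ρ m ^ d := by
      calc (M : ℝ) = ∑ _m : Fin M, (1 : ℝ) := by simp
        _ ≤ _ := Finset.sum_le_sum fun m _ => h1 m
    rw [hsum] at h2
    linarith
  refine ⟨hd0, ?_⟩
  -- n ≠ 0
  rcases Nat.eq_zero_or_pos n with hn | hn
  · exfalso
    subst hn
    haveI : Subsingleton (EuclideanSpace ℝ (Fin 0)) := inferInstance
    obtain ⟨γ, hγ⟩ := hΓne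
    have h01 : (⟨0, by omega⟩ : Fin M) ≠ ⟨1, by omega⟩ := by
      simp [Fin.ext_iff]
    exact Set.disjoint_left.mp (hdisj h01) (Set.mem_image_of_mem _ hγ)
      (by rw [Subsingleton.elim (s ⟨0, by omega⟩ γ) (s ⟨1, by omega⟩ γ)]
          exact Set.mem_image_of_mem _ hγ)
  haveI : Nonempty (Fin n) := ⟨⟨0, hn⟩⟩
  haveI : Nontrivial (EuclideanSpace ℝ (Fin n)) := inferInstance
  -- the pieces
  have hpiece : ∀ m, s m '' Γ ⊆ Γ := by
    intro m
    conv_rhs => rw [hfix]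
    exact Set.subset_iUnion (fun m => s m '' Γ) m
  -- homeomorphism and measure structure of each similarity
  have hsim' : ∀ m, ∃ h : EuclideanSpace ℝ (Fin n) ≃ₜ EuclideanSpace ℝ (Fin n), ⇑h = s m ∧
      ∀ A : Set (EuclideanSpace ℝ (Fin n)), volume (s m '' A) = ENNReal.ofReal (ρ m ^ n) * volume A :=
    fun m => aux_sim (s m) (ρ m) (hρ m).1 (hsim m)
  choose hom hhom hmeas using hsim'
  have hcont : ∀ m, Continuous (s m) := fun m => hhom m ▸ (hom m).continuous
  have hpc : ∀ m, IsCompact (s m '' Γ) := fun m => hΓc.image (hcont m)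
  -- separation radius
  have hthick : ∀ p : Fin M × Fin M, ∃ δ : ℝ, 0 < δ ∧ (p.1 ≠ p.2 →
      Disjoint (thickening δ (s p.1 '' Γ)) (thickening δ (s p.2 '' Γ))) := by
    intro p
    by_cases hp : p.1 = p.2
    · exact ⟨1, one_pos, fun h => absurd hp h⟩
    · obtain ⟨δ, hδ, hdis⟩ := (hdisj hp).exists_thickenings (hpc p.1) (hpc p.2).isClosed
      exact ⟨δ, hδ, fun _ => hdis⟩
  choose δf hδf hδdis using hthick
  set δ : ℝ := Finset.univ.inf' Finset.univ_nonempty δf with hδdef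
  have hδ0 : 0 < δ := by
    rw [hδdef, Finset.lt_inf'_iff]
    exact fun p _ => hδf p
  have hδle : ∀ p, δ ≤ δf p := fun p => Finset.inf'_le _ (Finset.mem_univ p)
  -- the open set U
  set U : Set (EuclideanSpace ℝ (Fin n)) := thickening δ Γ with hUdef
  have hUopen : IsOpen U := isOpen_thickening
  have hΓU : Γ ⊆ U := self_subset_thickening hδ0 Γ
  have hUne : U.Nonempty := hΓne.mono hΓU
  -- s m maps U into thickening δ (s m '' Γ) and into U
  have hUsub : ∀ m, s m '' U ⊆ thickening δ (s m '' Γ) := by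
    rintro m _ ⟨x, hx, rfl⟩
    obtain ⟨γ, hγ, hdist⟩ := mem_thickening_iff.mp hx
    refine mem_thickening_iff.mpr ⟨s m γ, Set.mem_image_of_mem _ hγ, ?_⟩
    rw [hsim]
    calc ρ m * dist x γ ≤ 1 * dist x γ :=
          mul_le_mul_of_nonneg_right (hρ m).2.le dist_nonneg
      _ < δ := by rwa [one_mul]
  have hUsub2 : ∀ m, s m '' U ⊆ U := by
    rintro m _ ⟨x, hx, rfl⟩
    obtain ⟨γ, hγ, hdist⟩ := mem_thickening_iff.mp hx
    refine mem_thickening_iff.mpr ⟨s m γ, hpiece m (Set.mem_image_of_mem _ hγ), ?_⟩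
    rw [hsim]
    calc ρ m * dist x γ ≤ 1 * dist x γ :=
          mul_le_mul_of_nonneg_right (hρ m).2.le dist_nonneg
      _ < δ := by rwa [one_mul]
  have hUdis : Pairwise (Function.onFun Disjoint fun m => s m '' U) := by
    intro m m' hmm
    have h1 := (hδdis (m, m') hmm).mono
      (thickening_mono (hδle (m, m')) _) (thickening_mono (hδle (m, m')) _)
    exact h1.mono (hUsub m) (hUsub m')
  -- measure bookkeeping
  have hSopen : ∀ m, IsOpen (s m '' U) := fun m => by
    rw [← hhom m]; exact (hom m).isOpenMap U hUopen
  have hμU0 : volume U ≠ 0 := (hUopen.measure_pos volume hUne).ne'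
  have hUbdd : IsBounded U := hΓc.isBounded.thickening
  have hμUtop : volume U ≠ ⊤ := by
    have h1 : IsCompact (closure U) := hUbdd.isCompact_closure
    exact (lt_of_le_of_lt (measure_mono subset_closure) h1.measure_lt_top).ne
  have hmeasU : volume (⋃ m, s m '' U)
      = (∑ m, ENNReal.ofReal (ρ m ^ n)) * volume U := by
    rw [measure_iUnion hUdis fun m => (hSopen m).measurableSet, tsum_fintype,
      Finset.sum_mul]
    exact Finset.sum_congr rfl fun m _ => hmeas m U
  have hle : (∑ m, ENNReal.ofReal (ρ m ^ n)) * volume U ≤ 1 * volume U := by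
    rw [one_mul, ← hmeasU]
    exact measure_mono (Set.iUnion_subset hUsub2)
  have hC : (∑ m, ENNReal.ofReal (ρ m ^ n)) ≤ 1 :=
    (ENNReal.mul_le_mul_iff_left hμU0 hμUtop).mp hle
  have hCsum : (∑ m, ENNReal.ofReal (ρ m ^ n))
      = ENNReal.ofReal (∑ m, ρ m ^ n) := by
    rw [ENNReal.ofReal_sum_of_nonneg fun m _ => pow_nonneg (hρ m).1.le n]
  have hreal : ∑ m, ρ m ^ n ≤ 1 := by
    rw [hCsum] at hC
    exact ENNReal.ofReal_le_one.mp hC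
  -- strictness
  have hstrict : ∑ m, ρ m ^ n < 1 := by
    rcases lt_or_eq_of_le hreal with h | heq
    · exact h
    exfalso
    -- equality case: show U ⊆ Γ, so Γ is open, contradiction
    have hCeq : (∑ m, ENNReal.ofReal (ρ m ^ n)) = 1 := by
      rw [hCsum, heq, ENNReal.ofReal_one]
    have hveq : volume (⋃ m, s m '' U) = volume U := by
      rw [hmeasU, hCeq, one_mul]
    have hNnull : volume (U \ ⋃ m, s m '' U) = 0 := by
      rw [measure_diff (Set.iUnion_subset hUsub2)
        (isOpen_iUnion hSopen).measurableSet.nullMeasurableSet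
        (hveq ▸ hμUtop), hveq, tsub_self]
    -- contraction factor
    set r : ℝ := Finset.univ.sup' Finset.univ_nonempty ρ with hrdef
    have hrle : ∀ m, ρ m ≤ r := fun m => Finset.le_sup' ρ (Finset.mem_univ m)
    have hr1 : r < 1 := by
      rw [hrdef, Finset.sup'_lt_iff]
      exact fun m _ => (hρ m).2
    have hr0 : 0 ≤ r := le_trans (hρ ⟨0, by omega⟩).1.le (hrle _)
    -- the approximating sets
    set A : ℕ → Set (EuclideanSpace ℝ (Fin n)) := fun k => {x | infDist x Γ ≤ r ^ k * δ} with hA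
    have hbase : U \ A 0 = ∅ := by
      rw [Set.diff_eq_empty]
      intro x hx
      rw [hA]
      simp only [Set.mem_setOf_eq, pow_zero, one_mul]
      exact (infDist_le_dist_of_mem (mem_thickening_iff.mp hx).choose_spec.1).trans
        (mem_thickening_iff.mp hx).choose_spec.2.le
    have hstep : ∀ k, volume (U \ A k) = 0 → volume (U \ A (k + 1)) = 0 := by
      intro k hk
      have hsub : U \ A (k + 1) ⊆ (U \ ⋃ m, s m '' U) ∪ ⋃ m, s m '' (U \ A k) := by
        intro x ⟨hxU, hxA⟩
        by_cases hx : x ∈ ⋃ m, s m '' U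
        · obtain ⟨m, y, hyU, rfl⟩ := by
            simpa only [Set.mem_iUnion, Set.mem_image] using hx
          right
          refine Set.mem_iUnion.mpr ⟨m, Set.mem_image_of_mem _ ⟨hyU, ?_⟩⟩
          intro hyA
          apply hxA
          rw [hA] at hyA ⊢
          simp only [Set.mem_setOf_eq] at hyA ⊢
          obtain ⟨γ, hγ, hγd⟩ := hΓc.exists_infDist_eq_dist hΓne y
          calc infDist (s m y) Γ ≤ dist (s m y) (s m γ) :=
                infDist_le_dist_of_mem (hpiece m (Set.mem_image_of_mem _ hγ))
            _ = ρ m * dist y γ := hsim m y γ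
            _ = ρ m * infDist y Γ := by rw [hγd]
            _ ≤ r * (r ^ k * δ) := by
                apply mul_le_mul (hrle m) hyA (infDist_nonneg) hr0
            _ = r ^ (k + 1) * δ := by ring
        · exact Or.inl ⟨hxU, hx⟩
      refine le_antisymm ?_ zero_le
      calc volume (U \ A (k + 1))
          ≤ volume ((U \ ⋃ m, s m '' U) ∪ ⋃ m, s m '' (U \ A k)) :=
            measure_mono hsub
        _ ≤ volume (U \ ⋃ m, s m '' U) + volume (⋃ m, s m '' (U \ A k)) :=
            measure_union_le _ _
        _ ≤ 0 + ∑' m, volume (s m '' (U \ A k)) := by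
            rw [hNnull]
            exact add_le_add le_rfl (measure_iUnion_le _)
        _ = 0 := by
            rw [zero_add, tsum_fintype]
            apply Finset.sum_eq_zero
            intro m _
            rw [hmeas m, hk, mul_zero]
    have hnull : ∀ k, volume (U \ A k) = 0 := by
      intro k
      induction k with
      | zero => rw [hbase]; exact measure_empty
      | succ k ih => exact hstep k ih
    -- U \ Γ is null
    have hsubU : U \ Γ ⊆ ⋃ k : ℕ, (U \ A k) := by
      intro x ⟨hxU, hxΓ⟩
      have hpos : 0 < infDist x Γ :=
        (hΓc.isClosed.notMem_iff_infDist_pos hΓne).mp hxΓ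
      obtain ⟨k, hk⟩ := exists_pow_lt_of_lt_one (div_pos hpos hδ0) hr1
      refine Set.mem_iUnion.mpr ⟨k, hxU, ?_⟩
      rw [hA]
      simp only [Set.mem_setOf_eq, not_le]
      calc r ^ k * δ < (infDist x Γ / δ) * δ := by
            apply mul_lt_mul_of_pos_right hk hδ0
        _ = infDist x Γ := by field_simp
    have hUΓnull : volume (U \ Γ) = 0 :=
      measure_mono_null hsubU (measure_iUnion_null hnull)
    have hUΓempty : U \ Γ = ∅ := by
      by_contra h
      exact ((hUopen.sdiff hΓc.isClosed).measure_pos volume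
        (Set.nonempty_iff_ne_empty.mpr h)).ne' hUΓnull
    have hUΓ : U = Γ := Set.Subset.antisymm (Set.diff_eq_empty.mp hUΓempty) hΓU
    have hΓopen : IsOpen Γ := hUΓ ▸ hUopen
    have hclopen : IsClopen Γ := ⟨hΓc.isClosed, hΓopen⟩
    have huniv : Γ = Set.univ := hclopen.eq_univ hΓne
    exact (noncompact_univ (EuclideanSpace ℝ (Fin n))) (huniv ▸ hΓc)
  -- conclude d < n
  by_contra hcon
  push_neg at hcon
  have h1 : ∀ m : Fin M, ρ m ^ d ≤ ρ m ^ (n : ℝ) := fun m =>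
    Real.rpow_le_rpow_of_exponent_ge (hρ m).1 (hρ m).2.le hcon
  have h2 : (1 : ℝ) ≤ ∑ m, ρ m ^ (n : ℝ) := by
    rw [← hsum]
    exact Finset.sum_le_sum fun m _ => h1 m
  simp only [Real.rpow_natCast] at h2
  linarith
end

section
/- Let 0 < d ≤ n and let Γ ⊂ ℝⁿ be a compact d-set. Then for every x ∈ Γ, ∫_Γ |log|x−y|| dH^d(y) < ∞, and moreover the double integral ∫_Γ ∫_Γ |log|x−y|| dH^d(y) dH^d(x) < ∞. -/
open Set MeasureTheory

/-- If Γ ⊂ ℝⁿ is a compact d-set, then for every x ∈ Γ the logarithmic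
integral ∫_Γ |log|x−y|| dH^d(y) is finite, and the corresponding double integral over
Γ × Γ is finite as well. -/
theorem stmt_6 {n : ℕ} (d : ℝ) (hd0 : 0 < d) (hdn : d ≤ n)
    (Γ : Set (EuclideanSpace ℝ (Fin n))) (hΓc : IsCompact Γ)
    (c₁ c₂ : ℝ) (hc₁ : 0 < c₁) (hc₁₂ : c₁ < c₂)
    (hlower : ∀ x ∈ Γ, ∀ r : ℝ, 0 < r → r ≤ 1 →
      ENNReal.ofReal (c₁ * r ^ d) ≤ μH[d] (Γ ∩ Metric.closedBall x r))
    (hupper : ∀ x ∈ Γ, ∀ r : ℝ, 0 < r → r ≤ 1 →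
      μH[d] (Γ ∩ Metric.closedBall x r) ≤ ENNReal.ofReal (c₂ * r ^ d)) :
    (∀ x ∈ Γ, ∫⁻ y in Γ, ENNReal.ofReal |Real.log (dist x y)| ∂(μH[d]) < ⊤) ∧
      ∫⁻ x in Γ, (∫⁻ y in Γ, ENNReal.ofReal |Real.log (dist x y)| ∂(μH[d])) ∂(μH[d]) < ⊤ := by
  set μ : Measure (EuclideanSpace ℝ (Fin n)) := μH[d] with hμdef
  have hΓm : MeasurableSet Γ := hΓc.measurableSet
  have hc₂ : 0 < c₂ := hc₁.trans hc₁₂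
  -- Γ has finite measure
  have hμΓ : μ Γ < ⊤ := by
    obtain ⟨t, hts, htf, hcov⟩ := hΓc.finite_cover_balls (e := 1) one_pos
    calc μ Γ ≤ μ (⋃ z ∈ htf.toFinset, Γ ∩ Metric.closedBall z 1) := by
          apply measure_mono
          intro y hy
          obtain ⟨z, hz, hyz⟩ := Set.mem_iUnion₂.1 (hcov hy)
          exact Set.mem_iUnion₂.2 ⟨z, htf.mem_toFinset.2 hz,
            hy, Metric.ball_subset_closedBall hyz⟩
      _ ≤ ∑ z ∈ htf.toFinset, μ (Γ ∩ Metric.closedBall z 1) :=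
          measure_biUnion_finset_le _ _
      _ < ⊤ := by
          refine ENNReal.sum_lt_top.2 fun z hz => ?_
          exact lt_of_le_of_lt (hupper z (hts (htf.mem_toFinset.1 hz)) 1 one_pos le_rfl)
            ENNReal.ofReal_lt_top
  -- diameter bound
  obtain ⟨D, hD⟩ := Metric.isBounded_iff.1 hΓc.isBounded
  set M : ENNReal := ENNReal.ofReal (Real.log (max D 2)) with hMdef
  -- the constant bounding the near-singularity part
  set C : ENNReal := ENNReal.ofReal (∫ t in Set.Ioi (0:ℝ), c₂ * Real.exp (-d * t)) with hCdef
  set K : ENNReal := C + M * μ Γ with hKdef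
  have hK : K < ⊤ :=
    ENNReal.add_lt_top.2 ⟨ENNReal.ofReal_lt_top,
      ENNReal.mul_lt_top ENNReal.ofReal_lt_top hμΓ⟩
  -- uniform bound on the inner integral
  have key : ∀ x ∈ Γ, ∫⁻ y in Γ, ENNReal.ofReal |Real.log (dist x y)| ∂μ ≤ K := by
    intro x hx
    have hfm : Measurable fun y : EuclideanSpace ℝ (Fin n) => |Real.log (dist x y)| :=
      (Real.measurable_log.comp (continuous_const.dist continuous_id).measurable).abs
    set B : Set (EuclideanSpace ℝ (Fin n)) := Metric.closedBall x 1 with hBdef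
    have hsplit :
        (∫⁻ y in Γ ∩ B, ENNReal.ofReal |Real.log (dist x y)| ∂μ) +
          ∫⁻ y in Γ \ B, ENNReal.ofReal |Real.log (dist x y)| ∂μ =
          ∫⁻ y in Γ, ENNReal.ofReal |Real.log (dist x y)| ∂μ :=
      lintegral_inter_add_diff _ _ measurableSet_closedBall
    -- near part
    have hnear : ∫⁻ y in Γ ∩ B, ENNReal.ofReal |Real.log (dist x y)| ∂μ ≤ C := by
      have hlayer := lintegral_eq_lintegral_meas_lt (μ.restrict (Γ ∩ B))
        (ae_of_all _ fun y => abs_nonneg (Real.log (dist x y))) hfm.aemeasurable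
      calc ∫⁻ y in Γ ∩ B, ENNReal.ofReal |Real.log (dist x y)| ∂μ
          = ∫⁻ t in Set.Ioi (0:ℝ),
              (μ.restrict (Γ ∩ B)) {y | t < |Real.log (dist x y)|} := hlayer
        _ ≤ ∫⁻ t in Set.Ioi (0:ℝ), ENNReal.ofReal (c₂ * Real.exp (-d * t)) := by
            refine setLIntegral_mono' measurableSet_Ioi fun t ht => ?_
            have ht0 : 0 < t := ht
            have hsub : (μ.restrict (Γ ∩ B)) {y | t < |Real.log (dist x y)|} ≤
                μ (Γ ∩ Metric.closedBall x (Real.exp (-t))) := by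
              rw [Measure.restrict_apply (measurableSet_lt measurable_const hfm)]
              apply measure_mono
              rintro y ⟨hty, hyΓ, hyB⟩
              refine ⟨hyΓ, ?_⟩
              have hty' : t < |Real.log (dist x y)| := hty
              have hdpos : 0 < dist x y := by
                rcases lt_or_eq_of_le (dist_nonneg (x := x) (y := y)) with h | h
                · exact h
                · exfalso
                  rw [← h] at hty'
                  simp at hty'
                  linarith
              have hdle1 : dist x y ≤ 1 := by
                have := Metric.mem_closedBall.1 hyB
                rwa [dist_comm] at this
              have hlognp : Real.log (dist x y) ≤ 0 :=
                Real.log_nonpos (le_of_lt hdpos) hdle1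
              rw [abs_of_nonpos hlognp] at hty'
              have hlt : Real.log (dist x y) ≤ -t := by linarith
              have : dist x y ≤ Real.exp (-t) := by
                calc dist x y = Real.exp (Real.log (dist x y)) :=
                      (Real.exp_log hdpos).symm
                  _ ≤ Real.exp (-t) := Real.exp_le_exp.2 hlt
              exact Metric.mem_closedBall.2 (by rwa [dist_comm])
            refine hsub.trans ?_
            have hr1 : Real.exp (-t) ≤ 1 := Real.exp_le_one_iff.2 (by linarith)
            have := hupper x hx (Real.exp (-t)) (Real.exp_pos _) hr1
            refine this.trans (le_of_eq ?_)
            congr 1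
            have : Real.exp (-t) ^ d = Real.exp (-d * t) := by
              rw [Real.rpow_def_of_pos (Real.exp_pos _), Real.log_exp]
              ring_nf
            rw [this]
        _ = C := by
            rw [hCdef]
            refine (ofReal_integral_eq_lintegral_ofReal ?_ ?_).symm
            · exact (exp_neg_integrableOn_Ioi 0 hd0).const_mul c₂
            · exact ae_of_all _ fun t => mul_nonneg hc₂.le (Real.exp_pos _).le
    -- far part
    have hfar : ∫⁻ y in Γ \ B, ENNReal.ofReal |Real.log (dist x y)| ∂μ ≤ M * μ Γ := by
      calc ∫⁻ y in Γ \ B, ENNReal.ofReal |Real.log (dist x y)| ∂μ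
          ≤ ∫⁻ _ in Γ \ B, M ∂μ := by
            refine setLIntegral_mono' (hΓm.diff measurableSet_closedBall)
              fun y hy => ?_
            obtain ⟨hyΓ, hyB⟩ := hy
            have h1 : 1 < dist x y := by
              have := Metric.mem_closedBall.not.1 hyB
              rw [dist_comm] at this
              linarith [not_le.1 this]
            have hle : dist x y ≤ max D 2 :=
              le_max_of_le_left (hD hx hyΓ)
            have hlog0 : 0 ≤ Real.log (dist x y) := Real.log_nonneg h1.le
            rw [abs_of_nonneg hlog0]
            exact ENNReal.ofReal_le_ofReal
              (Real.log_le_log (by linarith) hle)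
        _ = M * μ (Γ \ B) := setLIntegral_const _ _
        _ ≤ M * μ Γ := mul_le_mul_right (measure_mono Set.diff_subset) _
    calc ∫⁻ y in Γ, ENNReal.ofReal |Real.log (dist x y)| ∂μ
        = (∫⁻ y in Γ ∩ B, ENNReal.ofReal |Real.log (dist x y)| ∂μ) +
            ∫⁻ y in Γ \ B, ENNReal.ofReal |Real.log (dist x y)| ∂μ := hsplit.symm
      _ ≤ C + M * μ Γ := add_le_add hnear hfar
      _ = K := hKdef.symm
  refine ⟨fun x hx => lt_of_le_of_lt (key x hx) hK, ?_⟩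
  calc ∫⁻ x in Γ, (∫⁻ y in Γ, ENNReal.ofReal |Real.log (dist x y)| ∂μ) ∂μ
      ≤ ∫⁻ _ in Γ, K ∂μ := setLIntegral_mono' hΓm key
    _ = K * μ Γ := setLIntegral_const _ _
    _ < ⊤ := ENNReal.mul_lt_top hK hμΓ
end

section
/- Let 0 < d ≤ n, let Γ ⊂ ℝⁿ be a compact d-set with constants c₁ < c₂, let x ∈ Γ, and let f : (0,∞) → [0,∞) be non-increasing and continuous. Then there exist constants C₂ > C₁ > 0, depending only on c₁, c₂, n, and diam(Γ), such that C₁ d ∫₀^{diam Γ} r^{d−1} f(r) dr ≤ ∫_Γ f(|x−y|) dH^d(y) ≤ C₂ d ∫₀^{diam Γ} r^{d−1} f(r) dr. -/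
open Set MeasureTheory
open scoped ENNReal NNReal

lemma stmt7_lintegral_rpow_Ioc {d a b : ℝ} (hd : 0 < d) (ha : 0 ≤ a) (hab : a ≤ b) :
    ∫⁻ r in Set.Ioc a b, ENNReal.ofReal (r ^ (d - 1)) =
      ENNReal.ofReal ((b ^ d - a ^ d) / d) := by
  have hInt : IntegrableOn (fun r : ℝ => r ^ (d - 1)) (Set.Ioc a b) volume :=
    (intervalIntegral.intervalIntegrable_rpow' (by linarith : (-1:ℝ) < d - 1)).1
  have hnn : 0 ≤ᵐ[volume.restrict (Set.Ioc a b)] fun r : ℝ => r ^ (d - 1) :=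
    (ae_restrict_mem measurableSet_Ioc).mono fun r hr =>
      Real.rpow_nonneg (ha.trans hr.1.le) _
  rw [← ofReal_integral_eq_lintegral_ofReal hInt hnn]
  congr 1
  have h := integral_rpow (a := a) (b := b) (Or.inl (by linarith : (-1:ℝ) < d - 1))
  rw [intervalIntegral.integral_of_le hab] at h
  rw [h]
  norm_num

lemma stmt7_lintegral_le {d a b c : ℝ} {f : ℝ → ℝ} (hd : 0 < d) (ha : 0 ≤ a) (hab : a ≤ b)
    (hc : 0 ≤ c) (hfc : ∀ r ∈ Set.Ioc a b, f r ≤ c) :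
    ∫⁻ r in Set.Ioc a b, ENNReal.ofReal (r ^ (d - 1) * f r) ≤
      ENNReal.ofReal c * ENNReal.ofReal ((b ^ d - a ^ d) / d) := by
  have h1 : ∫⁻ r in Set.Ioc a b, ENNReal.ofReal (r ^ (d - 1) * f r) ≤
      ∫⁻ r in Set.Ioc a b, ENNReal.ofReal c * ENNReal.ofReal (r ^ (d - 1)) := by
    refine setLIntegral_mono' measurableSet_Ioc fun r hr => ?_
    have hr0 : 0 ≤ r := ha.trans hr.1.le
    calc ENNReal.ofReal (r ^ (d - 1) * f r)
        ≤ ENNReal.ofReal (r ^ (d - 1) * c) :=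
          ENNReal.ofReal_le_ofReal
            (mul_le_mul_of_nonneg_left (hfc r hr) (Real.rpow_nonneg hr0 _))
      _ = ENNReal.ofReal c * ENNReal.ofReal (r ^ (d - 1)) := by
          rw [ENNReal.ofReal_mul (Real.rpow_nonneg hr0 _)]; ring
  refine h1.trans ?_
  rw [lintegral_const_mul' _ _ ENNReal.ofReal_ne_top, stmt7_lintegral_rpow_Ioc hd ha hab]

lemma stmt7_lintegral_ge {d a b c : ℝ} {f : ℝ → ℝ} (hd : 0 < d) (ha : 0 ≤ a) (hab : a ≤ b)
    (hc : 0 ≤ c) (hfc : ∀ r ∈ Set.Ioc a b, c ≤ f r) :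
    ENNReal.ofReal c * ENNReal.ofReal ((b ^ d - a ^ d) / d) ≤
      ∫⁻ r in Set.Ioc a b, ENNReal.ofReal (r ^ (d - 1) * f r) := by
  rw [← stmt7_lintegral_rpow_Ioc hd ha hab, ← lintegral_const_mul' _ _ ENNReal.ofReal_ne_top]
  refine setLIntegral_mono' measurableSet_Ioc fun r hr => ?_
  have hr0 : 0 ≤ r := ha.trans hr.1.le
  calc ENNReal.ofReal c * ENNReal.ofReal (r ^ (d - 1))
      = ENNReal.ofReal (r ^ (d - 1) * c) := by
        rw [ENNReal.ofReal_mul (Real.rpow_nonneg hr0 _)]; ring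
    _ ≤ ENNReal.ofReal (r ^ (d - 1) * f r) :=
        ENNReal.ofReal_le_ofReal
          (mul_le_mul_of_nonneg_left (hfc r hr) (Real.rpow_nonneg hr0 _))

lemma stmt7_cover_Ioc {r₀ q : ℝ} (hr₀ : 0 < r₀) (hq0 : 0 < q) (hq1 : q < 1) :
    Set.Ioc (0:ℝ) r₀ ⊆ ⋃ k : ℕ, Set.Ioc (r₀ * q ^ (k + 1)) (r₀ * q ^ k) := by
  classical
  intro z hz
  have htend : Filter.Tendsto (fun k : ℕ => r₀ * q ^ (k + 1)) Filter.atTop (nhds 0) := by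
    have h2 : Filter.Tendsto (fun k : ℕ => (r₀ * q) * q ^ k) Filter.atTop (nhds ((r₀ * q) * 0)) :=
      (tendsto_pow_atTop_nhds_zero_of_lt_one hq0.le hq1).const_mul _
    rw [mul_zero] at h2
    have heq : (fun k : ℕ => r₀ * q ^ (k + 1)) = fun k : ℕ => (r₀ * q) * q ^ k := by
      funext k; ring
    rw [heq]; exact h2
  have hex : ∃ k : ℕ, r₀ * q ^ (k + 1) < z := (htend.eventually_lt_const hz.1).exists
  refine Set.mem_iUnion.2 ⟨Nat.find hex, Nat.find_spec hex, ?_⟩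
  rcases Nat.eq_zero_or_pos (Nat.find hex) with h0 | hpos
  · rw [h0, pow_zero, mul_one]; exact hz.2
  · have hmin := Nat.find_min hex (Nat.sub_lt hpos one_pos)
    have heq : Nat.find hex - 1 + 1 = Nat.find hex := Nat.succ_pred_eq_of_pos hpos
    rw [heq] at hmin
    exact le_of_not_gt hmin

lemma stmt7_disj_Ioc {u : ℕ → ℝ} (hu : ∀ k l, k ≤ l → u l ≤ u k) :
    Pairwise (Function.onFun Disjoint fun k => Set.Ioc (u (k + 1)) (u k)) := by
  have key : ∀ k l, k < l → Disjoint (Set.Ioc (u (k + 1)) (u k)) (Set.Ioc (u (l + 1)) (u l)) := by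
    intro k l h
    rw [Set.disjoint_left]
    rintro z ⟨hz1, _⟩ ⟨_, hz4⟩
    exact absurd (hz4.trans (hu _ _ h)) (not_le.2 hz1)
  intro k l hkl
  rcases lt_or_gt_of_ne hkl with h | h
  · exact key k l h
  · exact (key l k h).symm

/-- polar-coordinate type comparison on a compact d-set Γ: for a
non-increasing continuous f : (0,∞) → [0,∞), the integral ∫_Γ f(|x−y|) dH^d(y) is
comparable, uniformly in x ∈ Γ and f, to d ∫₀^{diam Γ} r^{d−1} f(r) dr, with constants
depending only on c₁, c₂, n and diam Γ. -/
theorem stmt_7 {n : ℕ} (d : ℝ) (hd0 : 0 < d) (hdn : d ≤ n)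
    (Γ : Set (EuclideanSpace ℝ (Fin n))) (hΓc : IsCompact Γ) (hΓne : Γ.Nonempty)
    (c₁ c₂ : ℝ) (hc₁ : 0 < c₁) (hc₁₂ : c₁ < c₂)
    (hlower : ∀ x ∈ Γ, ∀ r : ℝ, 0 < r → r ≤ 1 →
      ENNReal.ofReal (c₁ * r ^ d) ≤ μH[d] (Γ ∩ Metric.closedBall x r))
    (hupper : ∀ x ∈ Γ, ∀ r : ℝ, 0 < r → r ≤ 1 →
      μH[d] (Γ ∩ Metric.closedBall x r) ≤ ENNReal.ofReal (c₂ * r ^ d)) :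
    ∃ C₁ C₂ : ℝ, 0 < C₁ ∧ C₁ < C₂ ∧
      ∀ x ∈ Γ, ∀ f : ℝ → ℝ,
        (∀ r : ℝ, 0 < r → 0 ≤ f r) → AntitoneOn f (Set.Ioi 0) →
        ContinuousOn f (Set.Ioi 0) →
        (ENNReal.ofReal (C₁ * d) *
            ∫⁻ r in Set.Ioo (0 : ℝ) (Metric.diam Γ), ENNReal.ofReal (r ^ (d - 1) * f r) ≤
          ∫⁻ y in Γ, ENNReal.ofReal (f (dist x y)) ∂(μH[d])) ∧
        (∫⁻ y in Γ, ENNReal.ofReal (f (dist x y)) ∂(μH[d]) ≤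
          ENNReal.ofReal (C₂ * d) *
            ∫⁻ r in Set.Ioo (0 : ℝ) (Metric.diam Γ), ENNReal.ofReal (r ^ (d - 1) * f r)) := by
  classical
  have hΓm : MeasurableSet Γ := hΓc.measurableSet
  set μ : Measure (EuclideanSpace ℝ (Fin n)) := μH[d] with hμdef
  have hc₂ : 0 < c₂ := hc₁.trans hc₁₂
  -- singletons are null
  have hsing : ∀ z : EuclideanSpace ℝ (Fin n), μ {z} = 0 := by
    intro z
    have hlt : dimH ({z} : Set (EuclideanSpace ℝ (Fin n))) < (d.toNNReal : ℝ≥0∞) := by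
      rw [dimH_singleton]
      exact_mod_cast Real.toNNReal_pos.2 hd0
    have h0 := hausdorffMeasure_of_dimH_lt hlt
    rwa [Real.coe_toNNReal d hd0.le] at h0
  obtain ⟨x₀, hx₀⟩ := hΓne
  -- positive diameter
  have hR : 0 < Metric.diam Γ := by
    rcases (Metric.diam_nonneg (s := Γ)).lt_or_eq with h | h
    · exact h
    exfalso
    have hsub : ∀ y ∈ Γ, y = x₀ := by
      intro y hy
      have hle := Metric.dist_le_diam_of_mem hΓc.isBounded hy hx₀
      rw [← h] at hle
      exact dist_le_zero.1 hle
    have h2 : μ (Γ ∩ Metric.closedBall x₀ 1) ≤ μ {x₀} :=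
      measure_mono fun y hy => Set.mem_singleton_iff.2 (hsub y hy.1)
    have h3 := (hlower x₀ hx₀ 1 one_pos le_rfl).trans h2
    rw [hsing x₀, le_zero_iff, ENNReal.ofReal_eq_zero] at h3
    have h4 : (0:ℝ) < c₁ * (1:ℝ) ^ d := by rw [Real.one_rpow]; linarith
    linarith
  -- finite total mass
  have hcov : Γ ⊆ ⋃ y : Γ, Metric.ball (y : EuclideanSpace ℝ (Fin n)) 1 := fun z hz =>
    Set.mem_iUnion.2 ⟨⟨z, hz⟩, Metric.mem_ball_self one_pos⟩
  obtain ⟨t, ht⟩ := hΓc.elim_finite_subcover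
    (fun y : Γ => Metric.ball (y : EuclideanSpace ℝ (Fin n)) 1)
    (fun _ => Metric.isOpen_ball) hcov
  set Mr : ℝ := t.card * c₂ + 1 with hMrdef
  have hMr0 : 0 < Mr := by
    have : (0:ℝ) ≤ t.card * c₂ := mul_nonneg (Nat.cast_nonneg _) hc₂.le
    rw [hMrdef]; linarith
  have hMtop : μ Γ ≤ ENNReal.ofReal Mr := by
    have hsub2 : Γ ⊆ ⋃ y ∈ t, Γ ∩ Metric.closedBall (y : EuclideanSpace ℝ (Fin n)) 1 := by
      intro z hz
      obtain ⟨y, hyt, hzy⟩ := Set.mem_iUnion₂.1 (ht hz)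
      exact Set.mem_biUnion hyt ⟨hz, Metric.ball_subset_closedBall hzy⟩
    calc μ Γ ≤ μ (⋃ y ∈ t, Γ ∩ Metric.closedBall (y : EuclideanSpace ℝ (Fin n)) 1) :=
          measure_mono hsub2
      _ ≤ ∑ y ∈ t, μ (Γ ∩ Metric.closedBall (y : EuclideanSpace ℝ (Fin n)) 1) :=
          measure_biUnion_finset_le t _
      _ ≤ ∑ _y ∈ t, ENNReal.ofReal c₂ := Finset.sum_le_sum fun y _ => by
            have h := hupper (y : EuclideanSpace ℝ (Fin n)) y.2 1 one_pos le_rfl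
            rwa [Real.one_rpow, mul_one] at h
      _ = t.card • ENNReal.ofReal c₂ := Finset.sum_const _
      _ ≤ ENNReal.ofReal Mr := by
            rw [nsmul_eq_mul, ← ENNReal.ofReal_natCast t.card,
              ← ENNReal.ofReal_mul (Nat.cast_nonneg _)]
            exact ENNReal.ofReal_le_ofReal (by rw [hMrdef]; linarith)
  -- constants
  set R : ℝ := Metric.diam Γ with hRdef
  set r₀ : ℝ := min 1 R with hr₀def
  have hr₀pos : 0 < r₀ := lt_min one_pos hR
  have hr₀1 : r₀ ≤ 1 := min_le_left _ _
  have hr₀R : r₀ ≤ R := min_le_right _ _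
  set θ : ℝ := (c₁ / (2 * c₂)) ^ (1/d : ℝ) with hθdef
  have hfrac_pos : 0 < c₁ / (2 * c₂) := by positivity
  have hfrac_lt : c₁ / (2 * c₂) < 1 := by
    rw [div_lt_one (by positivity)]; linarith
  have hθpos : 0 < θ := Real.rpow_pos_of_pos hfrac_pos _
  have hθlt1 : θ < 1 := Real.rpow_lt_one hfrac_pos.le hfrac_lt (by positivity)
  have hθd : θ ^ d = c₁ / (2 * c₂) := by
    rw [hθdef, ← Real.rpow_mul hfrac_pos.le, one_div, inv_mul_cancel₀ hd0.ne',
      Real.rpow_one]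
  set β : ℝ := ((1/2 : ℝ) ^ d - (1/4 : ℝ) ^ d) / d with hβdef
  have hhalf : ((1:ℝ)/4) ^ d < ((1:ℝ)/2) ^ d :=
    Real.rpow_lt_rpow (by norm_num) (by norm_num) hd0
  have hβpos : 0 < β := by rw [hβdef]; exact div_pos (by linarith) hd0
  have hRd : 0 < R ^ d := Real.rpow_pos_of_pos hR _
  have hr₀d : 0 < r₀ ^ d := Real.rpow_pos_of_pos hr₀pos _
  have h2d : 0 < (2:ℝ) ^ d := Real.rpow_pos_of_pos two_pos _
  set κ₁ : ℝ := 4 * c₂ / (c₁ ^ 2 * d) with hκ₁def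
  set κ₂ : ℝ := R ^ d / (d * c₁ * r₀ ^ d) with hκ₂def
  have hκ₁pos : 0 < κ₁ := by rw [hκ₁def]; positivity
  have hκ₂pos : 0 < κ₂ := by rw [hκ₂def]; exact div_pos hRd (by positivity)
  set C₁ : ℝ := 1 / (d * (κ₁ + κ₂)) with hC₁def
  have hC₁pos : 0 < C₁ := by
    rw [hC₁def]
    exact one_div_pos.2 (mul_pos hd0 (add_pos hκ₁pos hκ₂pos))
  set κ₄ : ℝ := (c₂ * (2:ℝ) ^ d + Mr / r₀ ^ d) * (1 / β) with hκ₄def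
  have hκ₄pos : 0 < κ₄ := by
    rw [hκ₄def]
    exact mul_pos (add_pos (mul_pos hc₂ h2d) (div_pos hMr0 hr₀d)) (one_div_pos.2 hβpos)
  set C₂ : ℝ := max (κ₄ / d) (C₁ + 1) with hC₂def
  refine ⟨C₁, C₂, hC₁pos, lt_of_lt_of_le (lt_add_one C₁) (le_max_right _ _), ?_⟩
  intro x hx f hf0 hfa hfcont
  have hDmeas : Measurable (fun y : EuclideanSpace ℝ (Fin n) => dist x y) :=
    (continuous_const.dist continuous_id).measurable
  set IΓ := ∫⁻ y in Γ, ENNReal.ofReal (f (dist x y)) ∂μ with hIΓdef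
  set IR := ∫⁻ r in Set.Ioo (0:ℝ) R, ENNReal.ofReal (r ^ (d-1) * f r) with hIRdef
  -- pointwise bounds on sets
  have hDle : ∀ (T : Set (EuclideanSpace ℝ (Fin n))), MeasurableSet T → ∀ c : ℝ,
      (∀ y ∈ T, f (dist x y) ≤ c) →
      ∫⁻ y in T, ENNReal.ofReal (f (dist x y)) ∂μ ≤ ENNReal.ofReal c * μ T := by
    intro T hT c hcb
    calc ∫⁻ y in T, ENNReal.ofReal (f (dist x y)) ∂μ
        ≤ ∫⁻ _ in T, ENNReal.ofReal c ∂μ :=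
          setLIntegral_mono' hT fun y hy => ENNReal.ofReal_le_ofReal (hcb y hy)
      _ = ENNReal.ofReal c * μ T := setLIntegral_const T _
  have hDge : ∀ (T : Set (EuclideanSpace ℝ (Fin n))), MeasurableSet T → ∀ c : ℝ,
      (∀ y ∈ T, c ≤ f (dist x y)) →
      ENNReal.ofReal c * μ T ≤ ∫⁻ y in T, ENNReal.ofReal (f (dist x y)) ∂μ := by
    intro T hT c hcb
    calc ENNReal.ofReal c * μ T = ∫⁻ _ in T, ENNReal.ofReal c ∂μ :=
          (setLIntegral_const T _).symm
      _ ≤ _ := setLIntegral_mono' hT fun y hy => ENNReal.ofReal_le_ofReal (hcb y hy)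
  ---------------------------------------------------------------
  -- LOWER BOUND
  ---------------------------------------------------------------
  set rr : ℕ → ℝ := fun k => r₀ * θ ^ k with hrrdef
  have hrrpos : ∀ k, 0 < rr k := fun k => mul_pos hr₀pos (pow_pos hθpos k)
  have hrr1 : ∀ k, rr k ≤ 1 :=
    fun k => mul_le_one₀ hr₀1 (pow_nonneg hθpos.le k) (pow_le_one₀ hθpos.le hθlt1.le)
  have hrrmono : ∀ k l, k ≤ l → rr l ≤ rr k := fun k l h =>
    mul_le_mul_of_nonneg_left (pow_le_pow_of_le_one hθpos.le hθlt1.le h) hr₀pos.le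
  have hrrd : ∀ k, rr (k+1) ^ d = c₁ / (2*c₂) * rr k ^ d := by
    intro k
    have h1 : rr (k+1) = rr k * θ := by simp only [hrrdef]; rw [pow_succ]; ring
    rw [h1, Real.mul_rpow (hrrpos k).le hθpos.le, hθd]; ring
  set A : ℕ → Set (EuclideanSpace ℝ (Fin n)) :=
    fun k => Γ ∩ (fun y => dist x y) ⁻¹' Set.Ioc (rr (k+1)) (rr k) with hAdef
  have hAmeas : ∀ k, MeasurableSet (A k) := fun k =>
    hΓm.inter (hDmeas measurableSet_Ioc)
  have hAdisj : Pairwise (Function.onFun Disjoint A) := by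
    intro k l hkl
    exact ((stmt7_disj_Ioc hrrmono hkl).preimage (fun y => dist x y)).mono
      Set.inter_subset_right Set.inter_subset_right
  have hAμ : ∀ k, ENNReal.ofReal (c₁/2 * rr k ^ d) ≤ μ (A k) := by
    intro k
    have hset : A k =
        (Γ ∩ Metric.closedBall x (rr k)) \ (Γ ∩ Metric.closedBall x (rr (k+1))) := by
      ext y
      simp only [hAdef, Set.mem_inter_iff, Set.mem_preimage, Set.mem_Ioc, Set.mem_diff,
        Metric.mem_closedBall, dist_comm y x]
      constructor
      · rintro ⟨hy, h1, h2⟩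
        exact ⟨⟨hy, h2⟩, fun hmem => absurd hmem.2 (not_le.2 h1)⟩
      · rintro ⟨⟨hy, h2⟩, h3⟩
        exact ⟨hy, not_le.1 (fun hle => h3 ⟨hy, hle⟩), h2⟩
    have hsubB : Γ ∩ Metric.closedBall x (rr (k+1)) ⊆ Γ ∩ Metric.closedBall x (rr k) :=
      Set.inter_subset_inter_right _
        (Metric.closedBall_subset_closedBall (hrrmono k (k+1) (by omega)))
    have hfin : μ (Γ ∩ Metric.closedBall x (rr (k+1))) ≠ ⊤ :=
      ((hupper x hx _ (hrrpos _) (hrr1 _)).trans_lt ENNReal.ofReal_lt_top).ne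
    have hmeasb : NullMeasurableSet (Γ ∩ Metric.closedBall x (rr (k+1))) μ :=
      (hΓm.inter measurableSet_closedBall).nullMeasurableSet
    rw [hset, measure_diff hsubB hmeasb hfin]
    have h1 := hlower x hx (rr k) (hrrpos k) (hrr1 k)
    have h2 := hupper x hx (rr (k+1)) (hrrpos _) (hrr1 _)
    have heq : c₁ / 2 * rr k ^ d = c₁ * rr k ^ d - c₂ * rr (k+1) ^ d := by
      rw [hrrd k]; field_simp; ring
    rw [heq, ENNReal.ofReal_sub _ (mul_nonneg hc₂.le (Real.rpow_nonneg (hrrpos _).le _))]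
    exact tsub_le_tsub h1 h2
  set aseq : ℕ → ℝ≥0∞ :=
    fun j => ENNReal.ofReal (f (rr j)) * ENNReal.ofReal (c₁/2 * rr j ^ d) with haseqdef
  have hsum_lower : ∑' j, aseq j ≤ IΓ := by
    have hterm : ∀ j, aseq j ≤ ∫⁻ y in A j, ENNReal.ofReal (f (dist x y)) ∂μ := by
      intro j
      refine le_trans (mul_le_mul_right (hAμ j) _) (hDge (A j) (hAmeas j) (f (rr j)) ?_)
      intro y hy
      have h1 : rr (j+1) < dist x y := hy.2.1
      exact hfa (Set.mem_Ioi.2 ((hrrpos _).trans h1)) (Set.mem_Ioi.2 (hrrpos j)) hy.2.2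
    calc ∑' j, aseq j ≤ ∑' j, ∫⁻ y in A j, ENNReal.ofReal (f (dist x y)) ∂μ :=
          ENNReal.tsum_le_tsum hterm
      _ = ∫⁻ y in ⋃ j, A j, ENNReal.ofReal (f (dist x y)) ∂μ :=
          (lintegral_iUnion hAmeas hAdisj _).symm
      _ ≤ IΓ := lintegral_mono_set (Set.iUnion_subset fun j => Set.inter_subset_left)
  have hAsum : ∑' k, ∫⁻ ρ in Set.Ioc (rr (k+1)) (rr k), ENNReal.ofReal (ρ^(d-1) * f ρ)
      ≤ ENNReal.ofReal κ₁ * IΓ := by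
    have hterm : ∀ k, ∫⁻ ρ in Set.Ioc (rr (k+1)) (rr k), ENNReal.ofReal (ρ^(d-1) * f ρ)
        ≤ ENNReal.ofReal κ₁ * aseq (k+1) := by
      intro k
      have hle := stmt7_lintegral_le (f := f) hd0 (hrrpos (k+1)).le
        (hrrmono k (k+1) (by omega)) (hf0 _ (hrrpos (k+1)))
        (fun ρ hρ => hfa (Set.mem_Ioi.2 (hrrpos (k+1)))
          (Set.mem_Ioi.2 ((hrrpos (k+1)).trans hρ.1)) hρ.1.le)
      refine hle.trans ?_
      have hX : (0:ℝ) ≤ rr (k+1) ^ d := Real.rpow_nonneg (hrrpos _).le _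
      have harith : (rr k ^ d - rr (k+1) ^ d) / d ≤ κ₁ * (c₁/2 * rr (k+1) ^ d) := by
        have h1 : rr k ^ d = (2*c₂/c₁) * rr (k+1) ^ d := by
          rw [hrrd k]; field_simp
        have h2 : κ₁ * (c₁/2 * rr (k+1) ^ d) - (rr k ^ d - rr (k+1) ^ d)/d
            = rr (k+1) ^ d / d := by
          rw [h1, hκ₁def]; field_simp; ring
        have h3 : (0:ℝ) ≤ rr (k+1) ^ d / d := div_nonneg hX hd0.le
        linarith
      calc ENNReal.ofReal (f (rr (k+1))) * ENNReal.ofReal ((rr k ^ d - rr (k+1) ^ d) / d)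
          ≤ ENNReal.ofReal (f (rr (k+1))) * ENNReal.ofReal (κ₁ * (c₁/2 * rr (k+1) ^ d)) :=
            mul_le_mul_right (ENNReal.ofReal_le_ofReal harith) _
        _ = ENNReal.ofReal κ₁ * aseq (k+1) := by
            simp only [haseqdef]
            rw [ENNReal.ofReal_mul hκ₁pos.le]; ring
    calc ∑' k, ∫⁻ ρ in Set.Ioc (rr (k+1)) (rr k), ENNReal.ofReal (ρ^(d-1) * f ρ)
        ≤ ∑' k, ENNReal.ofReal κ₁ * aseq (k+1) := ENNReal.tsum_le_tsum hterm
      _ = ENNReal.ofReal κ₁ * ∑' k, aseq (k+1) := ENNReal.tsum_mul_left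
      _ ≤ ENNReal.ofReal κ₁ * ∑' j, aseq j := mul_le_mul_right
          (ENNReal.tsum_comp_le_tsum_of_injective
            (fun a b h => by simpa using h : Function.Injective (fun k : ℕ => k + 1)) aseq) _
      _ ≤ ENNReal.ofReal κ₁ * IΓ := mul_le_mul_right hsum_lower _
  have htail : ∫⁻ ρ in Set.Ioc r₀ R, ENNReal.ofReal (ρ^(d-1) * f ρ)
      ≤ ENNReal.ofReal κ₂ * IΓ := by
    have hle := stmt7_lintegral_le (f := f) hd0 hr₀pos.le hr₀R (hf0 _ hr₀pos)
      (fun ρ hρ => hfa (Set.mem_Ioi.2 hr₀pos) (Set.mem_Ioi.2 (hr₀pos.trans hρ.1)) hρ.1.le)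
    refine hle.trans ?_
    have hIball : ENNReal.ofReal (f r₀) * ENNReal.ofReal (c₁ * r₀ ^ d) ≤ IΓ := by
      have hball : ENNReal.ofReal (c₁ * r₀ ^ d) ≤ μ ((Γ ∩ Metric.closedBall x r₀) \ {x}) := by
        rw [measure_diff_null (hsing x)]
        exact hlower x hx r₀ hr₀pos hr₀1
      have hmeasT : MeasurableSet ((Γ ∩ Metric.closedBall x r₀) \ {x}) :=
        (hΓm.inter measurableSet_closedBall).diff (measurableSet_singleton x)
      refine le_trans (mul_le_mul_right hball _) (le_trans (hDge _ hmeasT (f r₀) ?_) ?_)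
      · intro y hy
        have hyx : y ≠ x := fun h => hy.2 (by simp [h])
        have hdpos : 0 < dist x y := dist_pos.2 (Ne.symm hyx)
        have hdle : dist x y ≤ r₀ := by
          have h5 := hy.1.2
          rwa [Metric.mem_closedBall, dist_comm] at h5
        exact hfa (Set.mem_Ioi.2 hdpos) (Set.mem_Ioi.2 hr₀pos) hdle
      · exact lintegral_mono_set (Set.diff_subset.trans Set.inter_subset_left)
    calc ENNReal.ofReal (f r₀) * ENNReal.ofReal ((R ^ d - r₀ ^ d)/d)
        ≤ ENNReal.ofReal (f r₀) * ENNReal.ofReal (κ₂ * (c₁ * r₀ ^ d)) := by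
          refine mul_le_mul_right (ENNReal.ofReal_le_ofReal ?_) _
          have heq2 : κ₂ * (c₁ * r₀ ^ d) = R ^ d / d := by
            rw [hκ₂def]; field_simp
          rw [heq2]
          exact (div_le_div_iff_of_pos_right hd0).2
            (sub_le_self _ (Real.rpow_nonneg hr₀pos.le _))
      _ = ENNReal.ofReal κ₂ * (ENNReal.ofReal (f r₀) * ENNReal.ofReal (c₁ * r₀ ^ d)) := by
          rw [ENNReal.ofReal_mul hκ₂pos.le]; ring
      _ ≤ ENNReal.ofReal κ₂ * IΓ := mul_le_mul_right hIball _
  have hIRle : IR ≤ ENNReal.ofReal (κ₁ + κ₂) * IΓ := by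
    have hsubR : Set.Ioo (0:ℝ) R ⊆ (⋃ k, Set.Ioc (rr (k+1)) (rr k)) ∪ Set.Ioc r₀ R := by
      intro z hz
      rcases le_or_gt z r₀ with h | h
      · exact Or.inl (stmt7_cover_Ioc hr₀pos hθpos hθlt1 ⟨hz.1, h⟩)
      · exact Or.inr ⟨h, hz.2.le⟩
    calc IR ≤ ∫⁻ ρ in (⋃ k, Set.Ioc (rr (k+1)) (rr k)) ∪ Set.Ioc r₀ R,
            ENNReal.ofReal (ρ^(d-1) * f ρ) := lintegral_mono_set hsubR
      _ ≤ (∫⁻ ρ in ⋃ k, Set.Ioc (rr (k+1)) (rr k), ENNReal.ofReal (ρ^(d-1) * f ρ))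
            + ∫⁻ ρ in Set.Ioc r₀ R, ENNReal.ofReal (ρ^(d-1) * f ρ) :=
          lintegral_union_le _ _ _
      _ ≤ (∑' k, ∫⁻ ρ in Set.Ioc (rr (k+1)) (rr k), ENNReal.ofReal (ρ^(d-1) * f ρ))
            + ∫⁻ ρ in Set.Ioc r₀ R, ENNReal.ofReal (ρ^(d-1) * f ρ) :=
          add_le_add_left (lintegral_iUnion_le _ _) _
      _ ≤ ENNReal.ofReal κ₁ * IΓ + ENNReal.ofReal κ₂ * IΓ := add_le_add hAsum htail
      _ = ENNReal.ofReal (κ₁ + κ₂) * IΓ := by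
          rw [ENNReal.ofReal_add hκ₁pos.le hκ₂pos.le, add_mul]
  ---------------------------------------------------------------
  -- UPPER BOUND
  ---------------------------------------------------------------
  set ss : ℕ → ℝ := fun k => r₀ * (1/2 : ℝ) ^ k with hssdef
  have hsspos : ∀ k, 0 < ss k := fun k => mul_pos hr₀pos (pow_pos (by norm_num) k)
  have hss1 : ∀ k, ss k ≤ 1 := fun k =>
    mul_le_one₀ hr₀1 (pow_nonneg (by norm_num) k) (pow_le_one₀ (by norm_num) (by norm_num))
  have hssmono : ∀ k l, k ≤ l → ss l ≤ ss k := fun k l h =>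
    mul_le_mul_of_nonneg_left (pow_le_pow_of_le_one (by norm_num) (by norm_num) h) hr₀pos.le
  have hss0 : ss 0 = r₀ := by simp only [hssdef]; rw [pow_zero, mul_one]
  have hsshalf : ∀ k, ss (k+1) = (1/2 : ℝ) * ss k := by
    intro k; simp only [hssdef]; rw [pow_succ]; ring
  set E : Set (EuclideanSpace ℝ (Fin n)) :=
    Γ ∩ (fun y => dist x y) ⁻¹' Set.Ioi r₀ with hEdef
  set B : ℕ → Set (EuclideanSpace ℝ (Fin n)) :=
    fun k => Γ ∩ (fun y => dist x y) ⁻¹' Set.Ioc (ss (k+1)) (ss k) with hBdef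
  have hBmeas : ∀ k, MeasurableSet (B k) := fun k => hΓm.inter (hDmeas measurableSet_Ioc)
  have hEmeas : MeasurableSet E := hΓm.inter (hDmeas measurableSet_Ioi)
  have hΓsub : Γ ⊆ ({x} ∪ E) ∪ ⋃ k, B k := by
    intro y hy
    rcases eq_or_ne y x with h | h
    · exact Or.inl (Or.inl (by simp [h]))
    · have hdpos : 0 < dist x y := dist_pos.2 (Ne.symm h)
      rcases le_or_gt (dist x y) r₀ with hle | hgt
      · have hmem := stmt7_cover_Ioc (q := (1/2:ℝ)) hr₀pos (by norm_num) (by norm_num)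
          ⟨hdpos, hle⟩
        obtain ⟨k, hk⟩ := Set.mem_iUnion.1 hmem
        exact Or.inr (Set.mem_iUnion.2 ⟨k, hy, hk⟩)
      · exact Or.inl (Or.inr ⟨hy, hgt⟩)
  set bseq : ℕ → ℝ≥0∞ :=
    fun j => ENNReal.ofReal (f (ss j)) * ENNReal.ofReal (ss j ^ d) with hbseqdef
  have hbR : ∀ j, ENNReal.ofReal β * bseq j ≤
      ∫⁻ ρ in Set.Ioc (ss (j+2)) (ss (j+1)), ENNReal.ofReal (ρ^(d-1) * f ρ) := by
    intro j
    have hge := stmt7_lintegral_ge (f := f) (c := f (ss j)) hd0 (hsspos (j+2)).le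
      (hssmono (j+1) (j+2) (by omega)) (hf0 _ (hsspos j))
      (fun ρ hρ => hfa (Set.mem_Ioi.2 ((hsspos (j+2)).trans hρ.1))
        (Set.mem_Ioi.2 (hsspos j)) (hρ.2.trans (hssmono j (j+1) (by omega))))
    refine le_trans (le_of_eq ?_) hge
    have h1 : ss (j+1) ^ d = (1/2:ℝ)^d * ss j ^ d := by
      rw [hsshalf j, Real.mul_rpow (by norm_num) (hsspos j).le]
    have h2 : ss (j+2) ^ d = (1/4:ℝ)^d * ss j ^ d := by
      have h3 : ss (j+2) = (1/4:ℝ) * ss j := by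
        rw [hsshalf (j+1), hsshalf j]; ring
      rw [h3, Real.mul_rpow (by norm_num) (hsspos j).le]
    have harith : β * ss j ^ d = (ss (j+1) ^ d - ss (j+2) ^ d) / d := by
      rw [h1, h2, hβdef]; ring
    simp only [hbseqdef]
    rw [← mul_assoc, mul_comm (ENNReal.ofReal β), mul_assoc,
      ← ENNReal.ofReal_mul hβpos.le, harith]
  have hssum : ∑' j, bseq j ≤ ENNReal.ofReal (1/β) * IR := by
    have hd1 : Pairwise (Function.onFun Disjoint fun j => Set.Ioc (ss (j+1+1)) (ss (j+1))) :=
      stmt7_disj_Ioc (u := fun j => ss (j+1)) (fun k l h => hssmono (k+1) (l+1) (by omega))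
    have hUsub : (⋃ j, Set.Ioc (ss (j+1+1)) (ss (j+1))) ⊆ Set.Ioo (0:ℝ) R := by
      intro z hz
      obtain ⟨j, hj⟩ := Set.mem_iUnion.1 hz
      refine ⟨(hsspos _).trans hj.1, lt_of_le_of_lt (hj.2.trans (hssmono 1 (j+1) (by omega))) ?_⟩
      have h1 : ss 1 = r₀ * (1/2 : ℝ) := by simp only [hssdef]; rw [pow_one]
      rw [h1]
      linarith
    have hchain : ENNReal.ofReal β * ∑' j, bseq j ≤ IR := by
      calc ENNReal.ofReal β * ∑' j, bseq j = ∑' j, ENNReal.ofReal β * bseq j :=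
            ENNReal.tsum_mul_left.symm
        _ ≤ ∑' j, ∫⁻ ρ in Set.Ioc (ss (j+1+1)) (ss (j+1)), ENNReal.ofReal (ρ^(d-1) * f ρ) :=
            ENNReal.tsum_le_tsum (fun j => hbR j)
        _ = ∫⁻ ρ in ⋃ j, Set.Ioc (ss (j+1+1)) (ss (j+1)), ENNReal.ofReal (ρ^(d-1) * f ρ) :=
            (lintegral_iUnion (fun _ => measurableSet_Ioc) hd1 _).symm
        _ ≤ IR := lintegral_mono_set hUsub
    calc ∑' j, bseq j = ENNReal.ofReal (1/β) * (ENNReal.ofReal β * ∑' j, bseq j) := by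
          rw [← mul_assoc, ← ENNReal.ofReal_mul (by positivity),
            one_div, inv_mul_cancel₀ hβpos.ne', ENNReal.ofReal_one, one_mul]
      _ ≤ ENNReal.ofReal (1/β) * IR := mul_le_mul_right hchain _
  have hIΓle : IΓ ≤ ENNReal.ofReal κ₄ * IR := by
    have hE : ∫⁻ y in E, ENNReal.ofReal (f (dist x y)) ∂μ ≤
        ENNReal.ofReal (Mr / r₀ ^ d) * bseq 0 := by
      have h1 := hDle E hEmeas (f r₀) (fun y hy => hfa (Set.mem_Ioi.2 hr₀pos)
        (Set.mem_Ioi.2 (hr₀pos.trans hy.2)) hy.2.le)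
      refine h1.trans ?_
      have h2 : μ E ≤ ENNReal.ofReal Mr := (measure_mono Set.inter_subset_left).trans hMtop
      refine (mul_le_mul_right h2 _).trans ?_
      simp only [hbseqdef, hss0]
      rw [← ENNReal.ofReal_mul (hf0 r₀ hr₀pos), ← ENNReal.ofReal_mul (hf0 r₀ hr₀pos),
        ← ENNReal.ofReal_mul (div_nonneg hMr0.le hr₀d.le)]
      refine ENNReal.ofReal_le_ofReal (le_of_eq ?_)
      field_simp
    have hB : ∀ k, ∫⁻ y in B k, ENNReal.ofReal (f (dist x y)) ∂μ ≤
        ENNReal.ofReal (c₂ * (2:ℝ)^d) * bseq (k+1) := by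
      intro k
      have h1 := hDle (B k) (hBmeas k) (f (ss (k+1)))
        (fun y hy => hfa (Set.mem_Ioi.2 (hsspos (k+1)))
          (Set.mem_Ioi.2 ((hsspos (k+1)).trans hy.2.1)) hy.2.1.le)
      refine h1.trans ?_
      have h2 : μ (B k) ≤ ENNReal.ofReal (c₂ * ss k ^ d) := by
        refine (measure_mono ?_).trans (hupper x hx (ss k) (hsspos k) (hss1 k))
        rintro y ⟨hy1, hy2⟩
        exact ⟨hy1, by rw [Metric.mem_closedBall, dist_comm]; exact hy2.2⟩
      refine (mul_le_mul_right h2 _).trans ?_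
      have hkd : ss k ^ d = (2:ℝ)^d * ss (k+1) ^ d := by
        have h3 : ss k = 2 * ss (k+1) := by rw [hsshalf k]; ring
        rw [h3, Real.mul_rpow (by norm_num) (hsspos (k+1)).le]
      simp only [hbseqdef]
      rw [← ENNReal.ofReal_mul (hf0 _ (hsspos (k+1))),
        ← ENNReal.ofReal_mul (hf0 _ (hsspos (k+1))),
        ← ENNReal.ofReal_mul (mul_nonneg hc₂.le h2d.le)]
      exact ENNReal.ofReal_le_ofReal (le_of_eq (by rw [hkd]; ring))
    calc IΓ ≤ ∫⁻ y in ({x} ∪ E) ∪ ⋃ k, B k, ENNReal.ofReal (f (dist x y)) ∂μ :=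
          lintegral_mono_set hΓsub
      _ ≤ (∫⁻ y in {x} ∪ E, ENNReal.ofReal (f (dist x y)) ∂μ)
            + ∫⁻ y in ⋃ k, B k, ENNReal.ofReal (f (dist x y)) ∂μ :=
          lintegral_union_le _ _ _
      _ ≤ ((∫⁻ y in {x}, ENNReal.ofReal (f (dist x y)) ∂μ)
            + ∫⁻ y in E, ENNReal.ofReal (f (dist x y)) ∂μ)
            + ∑' k, ∫⁻ y in B k, ENNReal.ofReal (f (dist x y)) ∂μ :=
          add_le_add (lintegral_union_le _ _ _) (lintegral_iUnion_le _ _)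
      _ ≤ ((0 : ℝ≥0∞) + ENNReal.ofReal (Mr / r₀ ^ d) * bseq 0)
            + ∑' k, ENNReal.ofReal (c₂ * (2:ℝ)^d) * bseq (k+1) := by
          refine add_le_add (add_le_add ?_ hE) (ENNReal.tsum_le_tsum hB)
          rw [setLIntegral_measure_zero _ _ (hsing x)]
      _ = ENNReal.ofReal (Mr / r₀ ^ d) * bseq 0
            + ENNReal.ofReal (c₂ * (2:ℝ)^d) * ∑' k, bseq (k+1) := by
          rw [zero_add, ENNReal.tsum_mul_left]
      _ ≤ ENNReal.ofReal (Mr / r₀ ^ d) * ∑' j, bseq j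
            + ENNReal.ofReal (c₂ * (2:ℝ)^d) * ∑' j, bseq j := by
          refine add_le_add (mul_le_mul_right (ENNReal.le_tsum 0) _)
            (mul_le_mul_right (ENNReal.tsum_comp_le_tsum_of_injective
              (fun a b h => by simpa using h : Function.Injective (fun k : ℕ => k + 1)) bseq) _)
      _ = ENNReal.ofReal (Mr / r₀ ^ d + c₂ * (2:ℝ)^d) * ∑' j, bseq j := by
          rw [ENNReal.ofReal_add (div_nonneg hMr0.le hr₀d.le)
            (mul_nonneg hc₂.le h2d.le), add_mul]
      _ ≤ ENNReal.ofReal (Mr / r₀ ^ d + c₂ * (2:ℝ)^d) * (ENNReal.ofReal (1/β) * IR) :=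
          mul_le_mul_right hssum _
      _ = ENNReal.ofReal κ₄ * IR := by
          rw [← mul_assoc, ← ENNReal.ofReal_mul
            (add_nonneg (div_nonneg hMr0.le hr₀d.le) (mul_nonneg hc₂.le h2d.le))]
          congr 2
          rw [hκ₄def]; ring
  ---------------------------------------------------------------
  -- CONCLUSION
  ---------------------------------------------------------------
  constructor
  · calc ENNReal.ofReal (C₁ * d) * IR
        ≤ ENNReal.ofReal (C₁ * d) * (ENNReal.ofReal (κ₁ + κ₂) * IΓ) :=
          mul_le_mul_right hIRle _
      _ = ENNReal.ofReal (C₁ * d * (κ₁ + κ₂)) * IΓ := by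
          rw [← mul_assoc, ← ENNReal.ofReal_mul (mul_nonneg hC₁pos.le hd0.le)]
      _ = IΓ := by
          have hne : d * (κ₁ + κ₂) ≠ 0 :=
            (mul_pos hd0 (add_pos hκ₁pos hκ₂pos)).ne'
          have h1 : C₁ * d * (κ₁ + κ₂) = 1 := by
            rw [hC₁def]; field_simp
          rw [h1, ENNReal.ofReal_one, one_mul]
  · refine hIΓle.trans (mul_le_mul_left (ENNReal.ofReal_le_ofReal ?_) _)
    have h1 : κ₄ / d ≤ C₂ := le_max_left _ _
    calc κ₄ = κ₄ / d * d := by field_simp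
      _ ≤ C₂ * d := mul_le_mul_of_nonneg_right h1 hd0.le
end

section
/- Let H be a Hilbert space, a(·,·) a continuous sesquilinear form on H with |a(u,v)| ≤ C_a‖u‖‖v‖ and coercive with |a(u,u)| ≥ α‖u‖², let F be a bounded antilinear functional on H, let φ ∈ H solve a(φ,ψ) = F(ψ) for all ψ ∈ H, and let V ⊂ H be a closed subspace with φ_V ∈ V solving a(φ_V, ψ) = F(ψ) for all ψ ∈ V. Suppose moreover a satisfies the symmetry a(u,v) = a(conj v, conj u) (conj denoting an antilinear involution preserving V and a's continuity), and let ζ ∈ H solve the auxiliary problem a(ζ,ψ) = G(ψ) for all ψ ∈ H, for another bounded antilinear functional G, with Galerkin solution ζ_V ∈ V. Then |G(conj(φ − φ_V))| ≤ C_a ‖φ − φ_V‖ · ‖ζ − ζ_V‖. -/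
/-- abstract Aubin–Nitsche / superconvergence duality estimate:
with a continuous coercive sesquilinear form a on H, a conjugation conj preserving a
closed subspace V, Galerkin solutions φ_V, ζ_V in V of the primal and dual problems,
and the symmetry a(u,v) = a(conj v, conj u), one has
|G(conj(φ − φ_V))| ≤ C_a ‖φ − φ_V‖ ‖ζ − ζ_V‖. -/
theorem stmt_15 {H : Type*} [NormedAddCommGroup H] [NormedSpace ℂ H]
    (a : H → H → ℂ) (Ca αc : ℝ) (hCa : 0 < Ca) (hαc : 0 < αc)
    (hcont : ∀ u v, ‖a u v‖ ≤ Ca * ‖u‖ * ‖v‖)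
    (hcoer : ∀ u, αc * ‖u‖ ^ 2 ≤ ‖a u u‖)
    (haddl : ∀ u u' v, a (u + u') v = a u v + a u' v)
    (haddr : ∀ u v v', a u (v + v') = a u v + a u v')
    (hsmull : ∀ (c : ℂ) u v, a (c • u) v = c * a u v)
    (hsmulr : ∀ (c : ℂ) u v, a u (c • v) = (starRingEnd ℂ) c * a u v)
    (conj : H → H)
    (hconjadd : ∀ u v, conj (u + v) = conj u + conj v)
    (hconjsmul : ∀ (c : ℂ) u, conj (c • u) = (starRingEnd ℂ) c • conj u)
    (hconjinv : ∀ u, conj (conj u) = u)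
    (hconjnorm : ∀ u, ‖conj u‖ = ‖u‖)
    (V : Submodule ℂ H) (hVclosed : IsClosed (V : Set H))
    (hconjV : ∀ v ∈ V, conj v ∈ V)
    (F G : H → ℂ) (CF CG : ℝ)
    (hFadd : ∀ u v, F (u + v) = F u + F v)
    (hFsmul : ∀ (c : ℂ) u, F (c • u) = (starRingEnd ℂ) c * F u)
    (hFbdd : ∀ u, ‖F u‖ ≤ CF * ‖u‖)
    (hGadd : ∀ u v, G (u + v) = G u + G v)
    (hGsmul : ∀ (c : ℂ) u, G (c • u) = (starRingEnd ℂ) c * G u)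
    (hGbdd : ∀ u, ‖G u‖ ≤ CG * ‖u‖)
    (φ φV ζ ζV : H) (hφVmem : φV ∈ V) (hζVmem : ζV ∈ V)
    (hφ : ∀ ψ, a φ ψ = F ψ)
    (hφV : ∀ ψ ∈ V, a φV ψ = F ψ)
    (hζ : ∀ ψ, a ζ ψ = G ψ)
    (hζV : ∀ ψ ∈ V, a ζV ψ = G ψ)
    (hsymm : ∀ u v, a u v = a (conj v) (conj u)) :
    ‖G (conj (φ - φV))‖ ≤ Ca * ‖φ - φV‖ * ‖ζ - ζV‖ := by

  have hsubl : ∀ u u' v, a (u - u') v = a u v - a u' v := by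
    intro u u' v
    have : u - u' = u + (-1 : ℂ) • u' := by simp [sub_eq_add_neg]
    rw [this, haddl, hsmull]; ring
  have hconjsub : ∀ u v, conj (u - v) = conj u - conj v := by
    intro u v
    have : u - v = u + (-1 : ℂ) • v := by simp [sub_eq_add_neg]
    rw [this, hconjadd, hconjsmul]; simp [sub_eq_add_neg]
  set e := φ - φV with he
  -- Galerkin orthogonality: a e ψ = 0 for ψ ∈ V
  have horth : ∀ ψ ∈ V, a e ψ = 0 := by
    intro ψ hψ
    rw [hsubl, hφ, hφV ψ hψ, sub_self]
  have h1 : G (conj e) = a ζ (conj e) := (hζ (conj e)).symm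
  have h2 : a ζ (conj e) = a e (conj ζ) := by
    rw [hsymm ζ (conj e), hconjinv]
  have h3 : a e (conj ζ) = a e (conj (ζ - ζV)) := by
    rw [hconjsub]
    have hz : a e (conj ζV) = 0 := horth _ (hconjV ζV hζVmem)
    have : conj ζ - conj ζV = conj ζ + (-1 : ℂ) • conj ζV := by
      simp [sub_eq_add_neg]
    rw [this, haddr, hsmulr, hz]; ring
  calc ‖G (conj e)‖ = ‖a e (conj (ζ - ζV))‖ := by rw [h1, h2, h3]
    _ ≤ Ca * ‖e‖ * ‖conj (ζ - ζV)‖ := hcont _ _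
    _ = Ca * ‖e‖ * ‖ζ - ζV‖ := by rw [hconjnorm]
end
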